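/- There exist constants c > 0 and ε₀ ∈ (0,1) such that for every ε with 0 < ε ≤ ε₀, every real polynomial p satisfying |p(x) − 1/(1+x)| ≤ ε for all x ∈ [0, 1/2] has degree at least c · log(1/ε). -/

import Mathlib

open Finset Polynomial

lemma aux_prod_dist (d i : ℕ) (hi : i ≤ d) :
    ∏ j ∈ (Finset.range (d+1)).erase i, Nat.dist i j
      = Nat.factorial i * Nat.factorial (d - i) := by
  have hsplit : (Finset.range (d+1)).erase i = Finset.range i ∪ Finset.Ico (i+1) (d+1) := by
    ext j
    simp only [Finset.mem_erase, Finset.mem_range, Finset.mem_union, Finset.mem_Ico]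
    omega
  have hdisj : Disjoint (Finset.range i) (Finset.Ico (i+1) (d+1)) := by
    rw [Finset.disjoint_left]
    intro a ha hb
    simp only [Finset.mem_range] at ha
    simp only [Finset.mem_Ico] at hb
    omega
  rw [hsplit, Finset.prod_union hdisj]
  congr 1
  · rw [← Finset.prod_range_add_one_eq_factorial i, ← Finset.prod_range_reflect]
    apply Finset.prod_congr rfl
    intro j hj
    simp only [Finset.mem_range] at hj
    rw [Nat.dist_eq_sub_of_le_right (by omega)]
    omega
  · rw [← Finset.prod_range_add_one_eq_factorial (d - i), Finset.prod_Ico_eq_prod_range]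
    apply Finset.prod_congr (by congr 1; omega)
    intro j hj
    rw [Nat.dist_eq_sub_of_le (by omega)]
    omega

lemma aux_fact_lb (d : ℕ) (hd : 1 ≤ d) :
    (d : ℝ) ^ d ≤ (Nat.factorial d : ℝ) * Real.exp 1 ^ d := by
  have h := Real.sum_le_exp_of_nonneg (x := (d:ℝ)) (by positivity) (d+1)
  have hterm : (d:ℝ)^d / (Nat.factorial d) ≤ ∑ i ∈ Finset.range (d+1), (d:ℝ)^i / (Nat.factorial i) := by
    apply Finset.single_le_sum (f := fun i => (d:ℝ)^i / (Nat.factorial i))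
    · intro i _; positivity
    · simp
  have hfac : (0:ℝ) < Nat.factorial d := by positivity
  have hexp : Real.exp (d:ℝ) = Real.exp 1 ^ d := by
    rw [← Real.exp_nat_mul]; ring_nf
  have h2 : (d:ℝ)^d / (Nat.factorial d) ≤ Real.exp 1 ^ d := by rw [← hexp]; exact hterm.trans h
  calc (d:ℝ)^d = ((d:ℝ)^d / (Nat.factorial d)) * (Nat.factorial d) := by field_simp
    _ ≤ Real.exp 1 ^ d * (Nat.factorial d) := by
        apply mul_le_mul_of_nonneg_right h2 (le_of_lt hfac)
    _ = (Nat.factorial d : ℝ) * Real.exp 1 ^ d := by ring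

lemma aux_basis_bound (d i : ℕ) (hd : 1 ≤ d) (hi : i ≤ d) :
    ∏ j ∈ (Finset.range (d+1)).erase i,
        |((i:ℝ)/(2*d) - (j:ℝ)/(2*d))⁻¹ * (-1 - (j:ℝ)/(2*d))|
      ≤ (6 * Real.exp 1) ^ d := by
  have hd0 : (0:ℝ) < d := by exact_mod_cast hd
  set E := (Finset.range (d+1)).erase i with hE
  have hcard : E.card = d := by
    rw [hE, Finset.card_erase_of_mem (by simp only [Finset.mem_range]; omega), Finset.card_range]
    omega
  -- split product
  have hsplit : ∏ j ∈ E, |((i:ℝ)/(2*d) - (j:ℝ)/(2*d))⁻¹ * (-1 - (j:ℝ)/(2*d))|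
      = (∏ j ∈ E, |(i:ℝ)/(2*d) - (j:ℝ)/(2*d)|)⁻¹ * ∏ j ∈ E, (1 + (j:ℝ)/(2*d)) := by
    rw [← Finset.prod_inv_distrib, ← Finset.prod_mul_distrib]
    apply Finset.prod_congr rfl
    intro j hj
    rw [abs_mul, abs_inv]
    congr 1
    have hjn : (0:ℝ) ≤ (j:ℝ)/(2*d) := by positivity
    rw [abs_of_nonpos (by linarith : (-1 - (j:ℝ)/(2*d)) ≤ 0)]
    ring
  rw [hsplit]
  have hden : ∏ j ∈ E, |(i:ℝ)/(2*d) - (j:ℝ)/(2*d)|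
      = ((Nat.factorial i * Nat.factorial (d-i) : ℕ) : ℝ) / (2*(d:ℝ))^d := by
    have hterms : ∀ j ∈ E, |(i:ℝ)/(2*d) - (j:ℝ)/(2*d)| = (Nat.dist i j : ℝ) / (2*d) := by
      intro j hj
      have hcomb : (i:ℝ)/(2*d) - (j:ℝ)/(2*d) = ((i:ℝ) - j)/(2*d) := by ring
      rw [hcomb, abs_div, abs_of_pos (by positivity : (0:ℝ) < 2*d)]
      congr 1
      rcases le_total i j with h | h
      · rw [Nat.dist_eq_sub_of_le h, abs_of_nonpos (by
          simp only [sub_nonpos]; exact_mod_cast h), Nat.cast_sub h]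
        ring
      · rw [Nat.dist_eq_sub_of_le_right h, abs_of_nonneg (by
          simp only [sub_nonneg]; exact_mod_cast h), Nat.cast_sub h]
    rw [Finset.prod_congr rfl hterms, Finset.prod_div_distrib, Finset.prod_const, hcard,
        ← Nat.cast_prod, aux_prod_dist d i hi]
  set F : ℝ := ((Nat.factorial i * Nat.factorial (d-i) : ℕ) : ℝ) with hF
  have hfpos : (0:ℝ) < F := by rw [hF]; positivity
  rw [hden]
  have hnum : ∏ j ∈ E, (1 + (j:ℝ)/(2*d)) ≤ (3/2)^d := by
    calc ∏ j ∈ E, (1 + (j:ℝ)/(2*d)) ≤ ∏ _j ∈ E, (3/2 : ℝ) := by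
          apply Finset.prod_le_prod
          · intro j _; positivity
          · intro j hj
            have hjd : j ≤ d := by
              rw [hE] at hj
              simp only [Finset.mem_erase, Finset.mem_range] at hj
              omega
            have hjr : (j:ℝ) ≤ d := by exact_mod_cast hjd
            have : (j:ℝ)/(2*d) ≤ 1/2 := by rw [div_le_iff₀ (by positivity)]; linarith
            linarith
      _ = (3/2:ℝ)^d := by rw [Finset.prod_const, hcard]
  have hP0 : (0:ℝ) ≤ ∏ j ∈ E, (1 + (j:ℝ)/(2*d)) :=
    Finset.prod_nonneg (fun j _ => by positivity)
  have hfac1 : (Nat.factorial d : ℝ) ≤ F * 2^d := by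
    have h1 : Nat.choose d i * (Nat.factorial i * Nat.factorial (d-i)) = Nat.factorial d := by
      rw [← Nat.choose_mul_factorial_mul_factorial hi]; ring
    have h2 : Nat.choose d i ≤ 2^d := by
      calc Nat.choose d i ≤ ∑ k ∈ Finset.range (d+1), Nat.choose d k :=
            Finset.single_le_sum (fun k _ => Nat.zero_le _)
              (by simp only [Finset.mem_range]; omega)
        _ = 2^d := Nat.sum_range_choose d
    have h3 : Nat.factorial d ≤ (Nat.factorial i * Nat.factorial (d-i)) * 2^d := by
      calc Nat.factorial d = Nat.choose d i * (Nat.factorial i * Nat.factorial (d-i)) := h1.symm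
        _ ≤ 2^d * (Nat.factorial i * Nat.factorial (d-i)) := Nat.mul_le_mul_right _ h2
        _ = (Nat.factorial i * Nat.factorial (d-i)) * 2^d := by ring
    rw [hF]; exact_mod_cast h3
  have hfac2 := aux_fact_lb d hd
  have hdF : (d:ℝ)^d ≤ F * (2^d * Real.exp 1 ^ d) := by
    calc (d:ℝ)^d ≤ (Nat.factorial d : ℝ) * Real.exp 1 ^ d := hfac2
      _ ≤ (F * 2^d) * Real.exp 1 ^ d :=
          mul_le_mul_of_nonneg_right hfac1 (by positivity)
      _ = F * (2^d * Real.exp 1 ^ d) := by ring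
  have hkey : (2*(d:ℝ))^d * (3/2)^d ≤ (6 * Real.exp 1)^d * F := by
    have hX : (0:ℝ) < 2^d * Real.exp 1 ^ d := by positivity
    apply le_of_mul_le_mul_right _ hX
    have hid : (2*(d:ℝ))^d * (3/2)^d * (2^d * Real.exp 1 ^ d)
        = (6 * Real.exp 1)^d * (d:ℝ)^d := by
      rw [← mul_pow, ← mul_pow, ← mul_pow, ← mul_pow]
      congr 1
      ring
    rw [hid]
    calc (6 * Real.exp 1)^d * (d:ℝ)^d
        ≤ (6 * Real.exp 1)^d * (F * (2^d * Real.exp 1 ^ d)) :=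
          mul_le_mul_of_nonneg_left hdF (by positivity)
      _ = (6 * Real.exp 1)^d * F * (2^d * Real.exp 1 ^ d) := by ring
  calc (F / (2*(d:ℝ))^d)⁻¹ * ∏ j ∈ E, (1 + (j:ℝ)/(2*d))
      ≤ (F / (2*(d:ℝ))^d)⁻¹ * (3/2)^d := by
        apply mul_le_mul_of_nonneg_left hnum
        positivity
    _ = (2*(d:ℝ))^d * (3/2)^d / F := by
        rw [inv_div]; ring
    _ ≤ (6 * Real.exp 1)^d := by
        rw [div_le_iff₀ hfpos]
        exact hkey

theorem stmt_13 :
    ∃ c > (0:ℝ), ∃ ε₀ : ℝ, 0 < ε₀ ∧ ε₀ < 1 ∧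
      ∀ ε : ℝ, 0 < ε → ε ≤ ε₀ →
        ∀ p : Polynomial ℝ,
          (∀ x ∈ Set.Icc (0:ℝ) (1/2), |p.eval x - 1 / (1 + x)| ≤ ε) →
          c * Real.log (1 / ε) ≤ (p.natDegree : ℝ) := by
  have hexp1 : (2:ℝ) ≤ Real.exp 1 := by
    have := Real.add_one_le_exp (1:ℝ)
    linarith
  set R : ℝ := 12 * Real.exp 1 with hR
  have hR1 : (1:ℝ) < R := by rw [hR]; nlinarith
  have hL : 0 < Real.log R := Real.log_pos hR1
  set L := Real.log R with hLdef
  have h2pos : (0:ℝ) < Real.log 2 := Real.log_pos (by norm_num)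
  refine ⟨1/(2*L), by positivity, Real.exp (-(2*(Real.log 2 + L))), Real.exp_pos _, ?_, ?_⟩
  · rw [Real.exp_lt_one_iff]
    linarith
  intro ε hε hεε₀ p hp
  set n := p.natDegree with hn
  set d := n + 1 with hd
  have hd1 : 1 ≤ d := by omega
  have hd0 : (0:ℝ) < d := by exact_mod_cast hd1
  set v : ℕ → ℝ := fun j => (j:ℝ)/(2*d) with hv
  set q : Polynomial ℝ := (Polynomial.X + 1) * p - 1 with hq
  have hq1 : q.eval (-1) = -1 := by simp [hq]
  have hqne : q ≠ 0 := fun h => by simp [h] at hq1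
  -- values on nodes are small
  have hqeval : ∀ i : ℕ, i ≤ d → |q.eval (v i)| ≤ 3/2 * ε := by
    intro i hid
    have hir : (i:ℝ) ≤ d := by exact_mod_cast hid
    have hx0 : 0 ≤ v i := by rw [hv]; positivity
    have hx2 : v i ≤ 1/2 := by
      rw [hv]; simp only
      rw [div_le_iff₀ (by positivity)]
      linarith
    have h1x : (0:ℝ) < 1 + v i := by linarith
    have heval : q.eval (v i) = (1 + v i) * (p.eval (v i) - 1/(1 + v i)) := by
      simp only [hq, Polynomial.eval_sub, Polynomial.eval_mul, Polynomial.eval_add,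
        Polynomial.eval_X, Polynomial.eval_one]
      field_simp
      ring
    rw [heval, abs_mul, abs_of_pos h1x]
    exact mul_le_mul (by linarith) (hp _ ⟨hx0, hx2⟩) (abs_nonneg _) (by norm_num)
  -- injectivity of nodes
  have hinj : Set.InjOn v (Finset.range (d+1)) := by
    intro a _ b _ hab
    have h2d : (2*(d:ℝ)) ≠ 0 := by positivity
    rw [hv] at hab
    simp only at hab
    rw [div_eq_div_iff h2d h2d] at hab
    have : (a:ℝ) = b := by
      field_simp at hab
      exact_mod_cast hab
    exact_mod_cast this
  -- degree bound
  have hdeg : q.degree < ((Finset.range (d+1)).card : ℕ) := by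
    rw [Finset.card_range, ← Polynomial.natDegree_lt_iff_degree_lt hqne]
    have h1 : q.natDegree ≤ d := by
      apply le_trans (Polynomial.natDegree_sub_le _ _)
      simp only [Polynomial.natDegree_one]
      rw [max_le_iff]
      refine ⟨?_, by omega⟩
      apply le_trans (Polynomial.natDegree_mul_le)
      have hX1 : (Polynomial.X + 1 : Polynomial ℝ).natDegree ≤ 1 := by
        apply le_trans (Polynomial.natDegree_add_le _ _)
        simp
      omega
    omega
  -- Lagrange representation
  have hrepr := Lagrange.eq_interpolate (v := v) (s := Finset.range (d+1)) hinj hdeg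
  have heval : q.eval (-1) = ∑ i ∈ Finset.range (d+1), q.eval (v i) *
      ∏ j ∈ (Finset.range (d+1)).erase i, ((v i - v j)⁻¹ * (-1 - v j)) := by
    conv_lhs => rw [hrepr]
    rw [Lagrange.interpolate_apply, Polynomial.eval_finset_sum]
    apply Finset.sum_congr rfl
    intro i _
    rw [Polynomial.eval_mul, Polynomial.eval_C]
    congr 1
    rw [Lagrange.basis, Polynomial.eval_prod]
    apply Finset.prod_congr rfl
    intro j _
    rw [Lagrange.basisDivisor]
    simp only [Polynomial.eval_mul, Polynomial.eval_C, Polynomial.eval_sub, Polynomial.eval_X]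
  -- key inequality
  have hkey : 1 ≤ 2 * ε * R ^ d := by
    have h1 : (1:ℝ) = |q.eval (-1)| := by rw [hq1]; norm_num
    have h2 : |q.eval (-1)| ≤ ∑ i ∈ Finset.range (d+1), (3/2*ε) * (6*Real.exp 1)^d := by
      rw [heval]
      apply le_trans (Finset.abs_sum_le_sum_abs _ _)
      apply Finset.sum_le_sum
      intro i hi
      rw [abs_mul]
      have hid : i ≤ d := by simp only [Finset.mem_range] at hi; omega
      have hb : |∏ j ∈ (Finset.range (d+1)).erase i, ((v i - v j)⁻¹ * (-1 - v j))|
          ≤ (6*Real.exp 1)^d := by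
        rw [Finset.abs_prod]
        exact aux_basis_bound d i hd1 hid
      apply mul_le_mul (hqeval i hid) hb (abs_nonneg _) (by positivity)
    have h3 : ∑ i ∈ Finset.range (d+1), (3/2*ε) * (6*Real.exp 1)^d
        = ((d+1 : ℕ):ℝ) * ((3/2*ε) * (6*Real.exp 1)^d) := by
      rw [Finset.sum_const, Finset.card_range, nsmul_eq_mul]
    have hcount : ((d+1 : ℕ):ℝ) ≤ 2^d := by
      have : d + 1 ≤ 2^d := Nat.lt_two_pow_self (n := d)
      exact_mod_cast this
    have h4 : ((d+1 : ℕ):ℝ) * ((3/2*ε) * (6*Real.exp 1)^d) ≤ 2 * ε * R ^ d := by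
      have hRpow : (2:ℝ)^d * (6*Real.exp 1)^d = R^d := by
        rw [← mul_pow, hR]
        congr 1
        ring
      have h6pos : (0:ℝ) < (6*Real.exp 1)^d := by positivity
      calc ((d+1 : ℕ):ℝ) * ((3/2*ε) * (6*Real.exp 1)^d)
          ≤ 2^d * ((3/2*ε) * (6*Real.exp 1)^d) := by
            apply mul_le_mul_of_nonneg_right hcount (by positivity)
        _ = (3/2) * ε * (2^d * (6*Real.exp 1)^d) := by ring
        _ = (3/2) * ε * R^d := by rw [hRpow]
        _ ≤ 2 * ε * R^d := by
            apply mul_le_mul_of_nonneg_right _ (by positivity)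
            linarith
    calc (1:ℝ) = |q.eval (-1)| := h1
      _ ≤ _ := h2
      _ = _ := h3
      _ ≤ _ := h4
  -- conclude via logs
  have hlogpos : 0 ≤ Real.log (2 * ε * R ^ d) := Real.log_nonneg hkey
  have hlogexp : Real.log (2 * ε * R ^ d) = Real.log 2 + Real.log ε + d * L := by
    rw [Real.log_mul (by positivity) (by positivity), Real.log_mul (by norm_num) (ne_of_gt hε),
      Real.log_pow, hLdef]
  have hA : Real.log (1/ε) = -Real.log ε := by rw [one_div, Real.log_inv]
  have hup : Real.log (1/ε) ≤ Real.log 2 + d * L := by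
    rw [hA]; rw [hlogexp] at hlogpos; linarith
  have hlow : 2*(Real.log 2 + L) ≤ Real.log (1/ε) := by
    have hle := Real.log_le_log hε hεε₀
    rw [Real.log_exp] at hle
    rw [hA]; linarith
  have hdn : (d:ℝ) = (n:ℝ) + 1 := by rw [hd]; push_cast; ring
  have hnL : Real.log (1/ε) / 2 ≤ (n:ℝ) * L := by
    rw [hdn] at hup
    nlinarith
  have hfin : Real.log (1/ε) ≤ (n:ℝ) * (2*L) := by linarith
  calc 1/(2*L) * Real.log (1/ε) ≤ 1/(2*L) * ((n:ℝ) * (2*L)) := by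
        apply mul_le_mul_of_nonneg_left hfin (by positivity)
    _ = (n:ℝ) := by field_simp
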